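/- arXiv:2508.20956 — 2 statements merged into one kernel-verified Lean document; each statement's English description precedes it below -/
import Mathlib

section
/- There exists a bounded operator C : K → H such that the operator matrix M_C = [[A, C],[0, B]] is Fredholm right invertible (surjective with finite-dimensional kernel) if and only if B is surjective, A is upper semi-Fredholm, and either dim coker(A) ≤ dim ker(B) < ∞ or dim ker(B) = dim coker(A) = ∞. -/
open ContinuousLinearMap Cardinal

noncomputable section

universe u

/-- nullity: dimension of the kernel, as a cardinal -/
def alphaDim {E F : Type u} [NormedAddCommGroup E] [NormedSpace ℂ E]
    [NormedAddCommGroup F] [NormedSpace ℂ F] (T : E →L[ℂ] F) : Cardinal :=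
  Module.rank ℂ (LinearMap.ker (T : E →ₗ[ℂ] F))

/-- deficiency: dimension of the cokernel, as a cardinal -/
def betaDim {E F : Type u} [NormedAddCommGroup E] [NormedSpace ℂ E]
    [NormedAddCommGroup F] [NormedSpace ℂ F] (T : E →L[ℂ] F) : Cardinal :=
  Module.rank ℂ (F ⧸ LinearMap.range (T : E →ₗ[ℂ] F))

/-- the upper triangular operator matrix [[A, C],[0, B]] acting on H ⊕ K -/
def MC {H K : Type u} [NormedAddCommGroup H] [NormedSpace ℂ H]
    [NormedAddCommGroup K] [NormedSpace ℂ K]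
    (A : H →L[ℂ] H) (B : K →L[ℂ] K) (C : K →L[ℂ] H) : (H × K) →L[ℂ] (H × K) :=
  (A.comp (fst ℂ H K) + C.comp (snd ℂ H K)).prod (B.comp (snd ℂ H K))

/-- T - λ -/
def shf {E : Type u} [NormedAddCommGroup E] [NormedSpace ℂ E]
    (T : E →L[ℂ] E) (l : ℂ) : E →L[ℂ] E := T - l • ContinuousLinearMap.id ℂ E

/-- Fredholm left invertible spectrum -/
def sigmaFLI {E : Type u} [NormedAddCommGroup E] [NormedSpace ℂ E]
    (T : E →L[ℂ] E) : Set ℂ :=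
  {l | ¬ (Function.Injective (shf T l) ∧ betaDim (shf T l) < ℵ₀)}

/-- Fredholm right invertible spectrum -/
def sigmaFRI {E : Type u} [NormedAddCommGroup E] [NormedSpace ℂ E]
    (T : E →L[ℂ] E) : Set ℂ :=
  {l | ¬ (Function.Surjective (shf T l) ∧ alphaDim (shf T l) < ℵ₀)}

/-- polynomially convex hull: the set together with the bounded components of its complement -/
def polyHull (S : Set ℂ) : Set ℂ :=
  S ∪ {z | z ∉ S ∧ Bornology.IsBounded (connectedComponentIn Sᶜ z)}

variable {H K : Type u}
  [NormedAddCommGroup H] [InnerProductSpace ℂ H] [CompleteSpace H]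
  [NormedAddCommGroup K] [InnerProductSpace ℂ K] [CompleteSpace K]

lemma myImageClosed {E F : Type*} [NormedAddCommGroup E] [NormedSpace ℂ E] [CompleteSpace E]
    [NormedAddCommGroup F] [NormedSpace ℂ F] [CompleteSpace F]
    (S : E →L[ℂ] F) (hS : Function.Surjective S) {M : Set E} (hM : IsClosed M)
    (hker : ∀ x y, S x = S y → x ∈ M → y ∈ M) : IsClosed (S '' M) := by
  have hopen : IsOpenMap S := S.isOpenMap hS
  have himg : S '' M = (S '' Mᶜ)ᶜ := by
    ext z
    constructor
    · rintro ⟨x, hx, rfl⟩ ⟨y, hy, hyz⟩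
      exact hy (hker x y hyz.symm hx)
    · intro hz
      obtain ⟨x, rfl⟩ := hS z
      by_cases hx : x ∈ M
      · exact ⟨x, hx, rfl⟩
      · exact absurd ⟨x, hx, rfl⟩ hz
  rw [himg]
  exact (hopen _ hM.isOpen_compl).isClosed_compl


lemma myOrthCountable {E : Type*} [NormedAddCommGroup E] [InnerProductSpace ℂ E]
    [TopologicalSpace.SeparableSpace E] {w : Set E}
    (hw : Orthonormal ℂ ((↑) : w → E)) : Countable w := by
  have hdist : ∀ i j : w, i ≠ j → (1:ℝ) ≤ dist (i:E) (j:E) := by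
    intro i j hij
    have h1 : ‖(i:E)‖ = 1 := hw.1 i
    have h2 : ‖(j:E)‖ = 1 := hw.1 j
    have h3 : inner (𝕜 := ℂ) (i:E) (j:E) = 0 := hw.2 hij
    have h4 : ‖(i:E) - (j:E)‖ ^ 2 = 2 := by
      rw [@norm_sub_sq ℂ, h1, h2, h3]
      norm_num
    rw [dist_eq_norm]
    nlinarith [norm_nonneg ((i:E) - (j:E))]
  have : Pairwise (Function.onFun Disjoint fun i : w => Metric.ball (i:E) (1/2)) := by
    intro i j hij
    exact Metric.ball_disjoint_ball (by linarith [hdist i j hij])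
  exact this.countable_of_isOpen_disjoint (fun i => Metric.isOpen_ball)
    (fun i => Metric.nonempty_ball.2 (by norm_num))


lemma myHilbertBasisNat (V : Type u) [NormedAddCommGroup V] [InnerProductSpace ℂ V]
    [CompleteSpace V] [TopologicalSpace.SeparableSpace V]
    (h : ¬ FiniteDimensional ℂ V) : Nonempty (HilbertBasis ℕ ℂ V) := by
  obtain ⟨w, b, hb⟩ := exists_hilbertBasis ℂ V
  have hw : Orthonormal ℂ ((↑) : w → V) := hb ▸ b.orthonormal
  have hcount : Countable w := myOrthCountable hw
  have hrange : Set.range ⇑b = w := by rw [hb, Subtype.range_coe]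
  have hinf : Infinite w := by
    rw [Set.infinite_coe_iff]
    intro hfin
    apply h
    have hspan : (Submodule.span ℂ w).topologicalClosure = ⊤ := by
      simpa [hrange] using b.dense_span
    have hfd : FiniteDimensional ℂ (Submodule.span ℂ w) :=
      FiniteDimensional.span_of_finite ℂ hfin
    have hclosed : IsClosed ((Submodule.span ℂ w : Submodule ℂ V) : Set V) :=
      Submodule.closed_of_finiteDimensional _
    have : (Submodule.span ℂ w).topologicalClosure = Submodule.span ℂ w := by
      apply le_antisymm _ (Submodule.le_topologicalClosure _)
      intro x hx
      exact hclosed.closure_subset hx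
    rw [this] at hspan
    rw [hspan] at hfd
    exact Submodule.topEquiv.finiteDimensional
  obtain ⟨d⟩ := nonempty_denumerable_iff.mpr ⟨hcount, hinf⟩
  let e : ℕ ≃ w := (Denumerable.eqv w).symm
  have hv : Orthonormal ℂ (fun n => b (e n)) := b.orthonormal.comp e e.injective
  refine ⟨HilbertBasis.mk hv ?_⟩
  have : Set.range (fun n => b (e n)) = Set.range ⇑b := by
    rw [← Function.Surjective.range_comp e.surjective ⇑b]; rfl
  rw [this, b.dense_span]


lemma myIsoEquiv (V₁ V₂ : Type u) [NormedAddCommGroup V₁] [InnerProductSpace ℂ V₁]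
    [CompleteSpace V₁] [TopologicalSpace.SeparableSpace V₁]
    [NormedAddCommGroup V₂] [InnerProductSpace ℂ V₂]
    [CompleteSpace V₂] [TopologicalSpace.SeparableSpace V₂]
    (h₁ : ¬ FiniteDimensional ℂ V₁) (h₂ : ¬ FiniteDimensional ℂ V₂) :
    Nonempty (V₁ ≃ₗᵢ[ℂ] V₂) := by
  obtain ⟨b₁⟩ := myHilbertBasisNat V₁ h₁
  obtain ⟨b₂⟩ := myHilbertBasisNat V₂ h₂
  exact ⟨b₁.repr.trans b₂.repr.symm⟩

lemma MC_apply {H K : Type u} [NormedAddCommGroup H] [NormedSpace ℂ H]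
    [NormedAddCommGroup K] [NormedSpace ℂ K]
    (A : H →L[ℂ] H) (B : K →L[ℂ] K) (C : K →L[ℂ] H) (p : H × K) :
    MC A B C p = (A p.1 + C p.2, B p.2) := rfl

variable {H K : Type u}
  [NormedAddCommGroup H] [InnerProductSpace ℂ H] [CompleteSpace H]
  [NormedAddCommGroup K] [InnerProductSpace ℂ K] [CompleteSpace K]


lemma myForward (A : H →L[ℂ] H) (B : K →L[ℂ] K) (C : K →L[ℂ] H)
    (hs : Function.Surjective (MC A B C)) (hk : alphaDim (MC A B C) < ℵ₀) :
    Function.Surjective B ∧ (alphaDim A < ℵ₀ ∧ IsClosed (Set.range A)) ∧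
      ((betaDim A ≤ alphaDim B ∧ alphaDim B < ℵ₀) ∨ (ℵ₀ ≤ alphaDim B ∧ ℵ₀ ≤ betaDim A)) := by
  have hkM : Module.rank ℂ (LinearMap.ker (MC A B C : (H × K) →ₗ[ℂ] (H × K))) < ℵ₀ := hk
  -- B surjective
  have hB : Function.Surjective B := by
    intro k
    obtain ⟨⟨x, y⟩, h⟩ := hs (0, k)
    exact ⟨y, congrArg Prod.snd h⟩
  refine ⟨hB, ?_⟩
  -- ker A finite
  have hkerA : alphaDim A < ℵ₀ := by
    have hinj : Function.Injective (ContinuousLinearMap.inl ℂ H K).toLinearMap := by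
      intro a b hab
      exact congrArg Prod.fst hab
    have hle : Submodule.map (ContinuousLinearMap.inl ℂ H K).toLinearMap (LinearMap.ker (A : H →ₗ[ℂ] H))
        ≤ LinearMap.ker (MC A B C : (H × K) →ₗ[ℂ] (H × K)) := by
      rintro _ ⟨x, hx, rfl⟩
      have hx0 : A x = 0 := hx
      have : MC A B C ((ContinuousLinearMap.inl ℂ H K) x) = 0 := by
        simp [MC_apply, hx0]
      exact this
    calc Module.rank ℂ (LinearMap.ker (A : H →ₗ[ℂ] H))
        = Module.rank ℂ (Submodule.map (ContinuousLinearMap.inl ℂ H K).toLinearMap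
            (LinearMap.ker (A : H →ₗ[ℂ] H))) :=
          (Submodule.equivMapOfInjective _ hinj (LinearMap.ker (A : H →ₗ[ℂ] H))).rank_eq
      _ ≤ Module.rank ℂ (LinearMap.ker (MC A B C : (H × K) →ₗ[ℂ] (H × K))) := Submodule.rank_mono hle
      _ < ℵ₀ := hkM
  -- the finite-dimensional obstruction submodule N
  set N : Submodule ℂ K :=
    LinearMap.ker (B : K →ₗ[ℂ] K) ⊓ Submodule.comap (C : K →ₗ[ℂ] H) (LinearMap.range (A : H →ₗ[ℂ] H)) with hN
  have hNle : N ≤ Submodule.map (LinearMap.snd ℂ H K) (LinearMap.ker (MC A B C : (H × K) →ₗ[ℂ] (H × K))) := by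
    rintro y ⟨hyB, hyC⟩
    obtain ⟨x, hx⟩ := hyC
    refine ⟨(-x, y), ?_, rfl⟩
    have hyB0 : B y = 0 := hyB
    have hx0 : A x = C y := by simpa using hx
    have : MC A B C (-x, y) = 0 := by
      simp [MC_apply, hx0, hyB0]
    exact this
  have hNfin : Module.rank ℂ N < ℵ₀ :=
    lt_of_le_of_lt (le_trans (Submodule.rank_mono hNle) (rank_map_le _ _)) hkM
  haveI : Module.Free ℂ N := Module.Free.of_divisionRing ℂ N
  haveI : FiniteDimensional ℂ N := Module.rank_lt_aleph0_iff.mp hNfin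
  -- surjectivity decomposition
  have hTop : ∀ h : H, ∃ x : H, ∃ y ∈ LinearMap.ker (B : K →ₗ[ℂ] K), A x + C y = h := by
    intro h
    obtain ⟨⟨x, y⟩, hxy⟩ := hs (h, 0)
    rw [MC_apply, Prod.ext_iff] at hxy
    exact ⟨x, y, hxy.2, hxy.1⟩
  -- P : complement of N inside ker B
  set P : Submodule ℂ K := Nᗮ ⊓ LinearMap.ker (B : K →ₗ[ℂ] K) with hP
  have hsup : N ⊔ P = LinearMap.ker (B : K →ₗ[ℂ] K) :=
    Submodule.sup_orthogonal_inf_of_hasOrthogonalProjection (inf_le_left)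
  have hPclosed : IsClosed (P : Set K) := by
    rw [hP, Submodule.coe_inf]
    exact N.isClosed_orthogonal.inter (isClosed_ker B)
  haveI : CompleteSpace P := hPclosed.completeSpace_coe
  have hPdisj : ∀ p : K, p ∈ P → C p ∈ LinearMap.range (A : H →ₗ[ℂ] H) → p = 0 := by
    intro p hp hCp
    have h1 : p ∈ N := ⟨hp.2, hCp⟩
    have h2 : p ∈ Nᗮ := hp.1
    exact (Submodule.mem_bot ℂ).mp (N.orthogonal_disjoint.le_bot ⟨h1, h2⟩)
  -- the operator T
  set T : (H × P) →L[ℂ] H :=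
    A.comp (fst ℂ H P) + (C.comp (Submodule.subtypeL P)).comp (snd ℂ H P) with hT
  have hTapp : ∀ q : H × P, T q = A q.1 + C q.2 := fun q => rfl
  have hTsurj : Function.Surjective T := by
    intro h
    obtain ⟨x, y, hyB, hxy⟩ := hTop h
    rw [← hsup] at hyB
    obtain ⟨n, hn, p, hp, rfl⟩ := Submodule.mem_sup.mp hyB
    obtain ⟨x', hx'⟩ := hn.2
    refine ⟨(x + x', ⟨p, hp⟩), ?_⟩
    rw [hTapp]
    have hx'' : A x' = C n := by simpa using hx'
    simp only [map_add] at hxy ⊢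
    rw [hx'', ← hxy]
    abel
  have hTprop : ∀ q q' : H × P, T q = T q' → q.2 = 0 → q'.2 = 0 := by
    intro ⟨x, p⟩ ⟨x', p'⟩ heq hp0
    rw [hTapp, hTapp] at heq
    simp only at heq hp0
    rw [hp0] at heq
    simp only [Submodule.coe_zero, map_zero, add_zero] at heq
    have : C (p' : K) ∈ LinearMap.range (A : H →ₗ[ℂ] H) := ⟨x - x', by rw [map_sub, ContinuousLinearMap.coe_coe, heq]; abel⟩
    exact Subtype.ext (hPdisj _ p'.2 this)
  -- closed range of A
  have hclA : IsClosed (Set.range A) := by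
    have hM0 : IsClosed {q : H × P | q.2 = 0} := isClosed_eq continuous_snd continuous_const
    have himg : T '' {q : H × P | q.2 = 0} = Set.range A := by
      ext z
      constructor
      · rintro ⟨⟨x, p⟩, hp, rfl⟩
        rw [hTapp]
        simp only [Set.mem_setOf_eq] at hp
        rw [hp]
        exact ⟨x, by simp⟩
      · rintro ⟨x, rfl⟩
        exact ⟨(x, 0), rfl, by rw [hTapp]; simp⟩
    rw [← himg]
    exact myImageClosed T hTsurj hM0 (fun q q' h hq => hTprop q q' h hq)
  refine ⟨⟨hkerA, hclA⟩, ?_⟩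
  -- rank bookkeeping on the quotient
  set g : ↥(LinearMap.ker (B : K →ₗ[ℂ] K)) →ₗ[ℂ] (H ⧸ LinearMap.range (A : H →ₗ[ℂ] H)) :=
    ((LinearMap.range (A : H →ₗ[ℂ] H)).mkQ ∘ₗ (C : K →ₗ[ℂ] H)).domRestrict (LinearMap.ker (B : K →ₗ[ℂ] K)) with hg
  have hgsurj : Function.Surjective g := by
    intro q
    obtain ⟨h, rfl⟩ := (LinearMap.range (A : H →ₗ[ℂ] H)).mkQ_surjective q
    obtain ⟨x, y, hyB, hxy⟩ := hTop h
    refine ⟨⟨y, hyB⟩, ?_⟩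
    rw [hg]
    simp only [LinearMap.domRestrict_apply, LinearMap.comp_apply, ContinuousLinearMap.coe_coe]
    rw [← hxy]
    rw [map_add]
    have : (LinearMap.range (A : H →ₗ[ℂ] H)).mkQ (A x) = 0 := by
      rw [Submodule.mkQ_apply, Submodule.Quotient.mk_eq_zero]
      exact ⟨x, rfl⟩
    rw [this, zero_add]
  have hgker : Module.rank ℂ (LinearMap.ker g) < ℵ₀ := by
    have hinj : Function.Injective (LinearMap.ker (B : K →ₗ[ℂ] K)).subtype := Subtype.coe_injective
    have hle : Submodule.map (LinearMap.ker (B : K →ₗ[ℂ] K)).subtype (LinearMap.ker g) ≤ N := by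
      rintro _ ⟨⟨y, hyB⟩, hy, rfl⟩
      have hy0 : g ⟨y, hyB⟩ = 0 := hy
      rw [hg] at hy0
      simp only [LinearMap.domRestrict_apply, LinearMap.comp_apply,
        ContinuousLinearMap.coe_coe, Submodule.mkQ_apply, Submodule.Quotient.mk_eq_zero] at hy0
      exact ⟨hyB, hy0⟩
    calc Module.rank ℂ (LinearMap.ker g)
        = Module.rank ℂ (Submodule.map (LinearMap.ker (B : K →ₗ[ℂ] K)).subtype (LinearMap.ker g)) :=
          (Submodule.equivMapOfInjective _ hinj _).rank_eq
      _ ≤ Module.rank ℂ N := Submodule.rank_mono hle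
      _ < ℵ₀ := hNfin
  have hrn : Module.rank ℂ (LinearMap.range g) + Module.rank ℂ (LinearMap.ker g)
      = alphaDim B := LinearMap.rank_range_add_rank_ker g
  have hrange : Module.rank ℂ (LinearMap.range g) = betaDim A := by
    rw [LinearMap.range_eq_top.mpr hgsurj]
    exact rank_top ℂ _
  rw [hrange] at hrn
  by_cases hfin : alphaDim B < ℵ₀
  · left
    exact ⟨by rw [← hrn]; exact self_le_add_right _ _, hfin⟩
  · right
    push_neg at hfin
    refine ⟨hfin, ?_⟩
    by_contra hba
    push_neg at hba
    have : alphaDim B < ℵ₀ := by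
      rw [← hrn]
      exact add_lt_aleph0 hba hgker
    exact absurd this (not_lt.mpr hfin)

lemma myBackward [TopologicalSpace.SeparableSpace H] [TopologicalSpace.SeparableSpace K]
    (A : H →L[ℂ] H) (B : K →L[ℂ] K)
    (hB : Function.Surjective B) (hA1 : alphaDim A < ℵ₀) (hA2 : IsClosed (Set.range A))
    (hd : (betaDim A ≤ alphaDim B ∧ alphaDim B < ℵ₀) ∨ (ℵ₀ ≤ alphaDim B ∧ ℵ₀ ≤ betaDim A)) :
    ∃ C : K →L[ℂ] H, Function.Surjective (MC A B C) ∧ alphaDim (MC A B C) < ℵ₀ := by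
  -- the orthogonal complement of the (closed) range of A
  have hRA : IsClosed ((LinearMap.range (A : H →ₗ[ℂ] H) : Submodule ℂ H) : Set H) := by
    rwa [LinearMap.coe_range]
  haveI : CompleteSpace (LinearMap.range (A : H →ₗ[ℂ] H)) := hRA.completeSpace_coe
  set W : Submodule ℂ H := (LinearMap.range (A : H →ₗ[ℂ] H))ᗮ with hW
  have hcompl : IsCompl (LinearMap.range (A : H →ₗ[ℂ] H)) W := Submodule.isCompl_orthogonal_of_hasOrthogonalProjection
  have hsup : LinearMap.range (A : H →ₗ[ℂ] H) ⊔ W = ⊤ := hcompl.sup_eq_top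
  have hdisj : Disjoint (LinearMap.range (A : H →ₗ[ℂ] H)) W := hcompl.disjoint
  have hrankW : Module.rank ℂ W = betaDim A :=
    ((Submodule.quotientEquivOfIsCompl _ _ hcompl).rank_eq).symm
  -- ker B is a complete subspace
  haveI : CompleteSpace (LinearMap.ker (B : K →ₗ[ℂ] K)) := (isClosed_ker B).completeSpace_coe
  -- obtain a continuous surjection D : ker B → W with small kernel
  obtain ⟨D, hDsurj, hDker⟩ :
      ∃ D : (LinearMap.ker (B : K →ₗ[ℂ] K)) →L[ℂ] W, Function.Surjective D ∧
        Module.rank ℂ (LinearMap.ker (D : (LinearMap.ker (B : K →ₗ[ℂ] K)) →ₗ[ℂ] W)) < ℵ₀ := by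
    rcases hd with ⟨hba, hfin⟩ | ⟨hbinf, hainf⟩
    · -- finite-dimensional case
      haveI : Module.Free ℂ (LinearMap.ker (B : K →ₗ[ℂ] K)) := Module.Free.of_divisionRing ℂ _
      haveI : Module.Free ℂ W := Module.Free.of_divisionRing ℂ W
      haveI hfdB : FiniteDimensional ℂ (LinearMap.ker (B : K →ₗ[ℂ] K)) := Module.rank_lt_aleph0_iff.mp hfin
      haveI hfdW : FiniteDimensional ℂ W :=
        Module.rank_lt_aleph0_iff.mp (lt_of_le_of_lt (hrankW.le.trans hba) hfin)
      have hnm : Module.finrank ℂ W ≤ Module.finrank ℂ (LinearMap.ker (B : K →ₗ[ℂ] K)) := by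
        have := Cardinal.toNat_le_toNat (hrankW.symm ▸ hba :
          Module.rank ℂ W ≤ Module.rank ℂ (LinearMap.ker (B : K →ₗ[ℂ] K))) hfin
        simpa [Module.finrank] using this
      set n := Module.finrank ℂ W with hn
      set m := Module.finrank ℂ (LinearMap.ker (B : K →ₗ[ℂ] K)) with hm
      let b : Module.Basis (Fin m) ℂ (LinearMap.ker (B : K →ₗ[ℂ] K)) := Module.finBasis ℂ _
      let c : Module.Basis (Fin n) ℂ W := Module.finBasis ℂ _
      let f : Fin m → W := fun i => if h : (i : ℕ) < n then c ⟨i, h⟩ else 0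
      let D₀ : (LinearMap.ker (B : K →ₗ[ℂ] K)) →ₗ[ℂ] W := b.constr ℂ f
      have hD₀ : Function.Surjective D₀ := by
        rw [← LinearMap.range_eq_top, Module.Basis.constr_range]
        rw [eq_top_iff, ← c.span_eq]
        apply Submodule.span_mono
        rintro _ ⟨j, rfl⟩
        refine ⟨⟨(j : ℕ), lt_of_lt_of_le j.2 hnm⟩, ?_⟩
        simp only [f]
        rw [dif_pos j.2]
      refine ⟨LinearMap.toContinuousLinearMap D₀, hD₀, ?_⟩
      exact lt_of_le_of_lt (Submodule.rank_le _) hfin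
    · -- infinite-dimensional case
      have hnfdB : ¬ FiniteDimensional ℂ (LinearMap.ker (B : K →ₗ[ℂ] K)) := by
        intro hfd
        exact absurd (Module.rank_lt_aleph0_iff.mpr inferInstance) (not_lt.mpr hbinf)
      have hnfdW : ¬ FiniteDimensional ℂ W := by
        intro hfd
        have : Module.rank ℂ W < ℵ₀ := Module.rank_lt_aleph0_iff.mpr inferInstance
        rw [hrankW] at this
        exact absurd this (not_lt.mpr hainf)
      haveI : TopologicalSpace.SeparableSpace (LinearMap.ker (B : K →ₗ[ℂ] K)) := by
        haveI : SecondCountableTopology K := UniformSpace.secondCountable_of_separable K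
        exact TopologicalSpace.SecondCountableTopology.to_separableSpace
      haveI : TopologicalSpace.SeparableSpace W := by
        haveI : SecondCountableTopology H := UniformSpace.secondCountable_of_separable H
        exact TopologicalSpace.SecondCountableTopology.to_separableSpace
      obtain ⟨U⟩ := myIsoEquiv (LinearMap.ker (B : K →ₗ[ℂ] K)) W hnfdB hnfdW
      refine ⟨U.toLinearIsometry.toContinuousLinearMap, U.surjective, ?_⟩
      have hbot : LinearMap.ker (U.toLinearIsometry.toContinuousLinearMap : (LinearMap.ker (B : K →ₗ[ℂ] K)) →ₗ[ℂ] W) = ⊥ := by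
        ext x
        simp only [LinearMap.mem_ker, Submodule.mem_bot]
        constructor
        · intro hx
          exact U.injective (by simpa using hx)
        · intro hx
          simp [hx]
      rw [hbot]
      have : Module.rank ℂ (⊥ : Submodule ℂ (LinearMap.ker (B : K →ₗ[ℂ] K))) = 0 := rank_bot ℂ _
      rw [this]
      exact aleph0_pos
  -- assemble C
  set C : K →L[ℂ] H :=
    W.subtypeL ∘L D ∘L Submodule.orthogonalProjection (LinearMap.ker (B : K →ₗ[ℂ] K)) with hC
  have hCval : ∀ y : LinearMap.ker (B : K →ₗ[ℂ] K), C (y : K) = (D y : H) := by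
    intro y
    rw [hC]
    simp [Submodule.orthogonalProjection_mem_subspace_eq_self]
  have hCW : ∀ y : K, C y ∈ W := fun y => (D _).2
  refine ⟨C, ?_, ?_⟩
  · -- surjectivity
    rintro ⟨h, k⟩
    obtain ⟨y₁, hy₁⟩ := hB k
    have hmem : h - C y₁ ∈ LinearMap.range (A : H →ₗ[ℂ] H) ⊔ W := by rw [hsup]; trivial
    obtain ⟨a, ⟨x, hx⟩, w, hw, hdecomp⟩ := Submodule.mem_sup.mp hmem
    obtain ⟨v, hv⟩ := hDsurj ⟨w, hw⟩
    refine ⟨(x, y₁ + (v : K)), ?_⟩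
    rw [MC_apply]
    have h1 : B (y₁ + (v : K)) = k := by
      rw [map_add, hy₁]
      have : B (v : K) = 0 := v.2
      rw [this, add_zero]
    have h2 : A x + C (y₁ + (v : K)) = h := by
      have hCv : C (v : K) = w := by rw [hCval v, hv]
      rw [map_add, hCv, ← ContinuousLinearMap.coe_coe A, hx]
      have hsum : (a + w) + C y₁ = h := by rw [hdecomp]; abel
      rw [← hsum]
      abel
    rw [h1, h2]
  · -- finite kernel
    have key : ∀ z : H × K, z ∈ LinearMap.ker (MC A B C : (H × K) →ₗ[ℂ] (H × K)) →
        A z.1 = 0 ∧ ∃ h : z.2 ∈ LinearMap.ker (B : K →ₗ[ℂ] K), D ⟨z.2, h⟩ = 0 := by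
      rintro ⟨x, y⟩ hxy
      have hxy0 : MC A B C (x, y) = 0 := hxy
      rw [MC_apply, Prod.ext_iff] at hxy0
      obtain ⟨h1, h2⟩ := hxy0
      have hyB : y ∈ LinearMap.ker (B : K →ₗ[ℂ] K) := h2
      have hCy : C y = (D ⟨y, hyB⟩ : H) := hCval ⟨y, hyB⟩
      have hAxW : A x ∈ W := by
        have hax : A x = -C y := eq_neg_of_add_eq_zero_left h1
        rw [hax]
        exact W.neg_mem (hCW y)
      have hAx0 : A x = 0 := by
        have := hdisj.le_bot ⟨⟨x, rfl⟩, hAxW⟩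
        simpa using this
      have hCy0 : C y = 0 := by rw [hAx0, zero_add] at h1; exact h1
      refine ⟨hAx0, hyB, ?_⟩
      apply Subtype.ext
      rw [← hCy]
      exact hCy0
    let phi : (LinearMap.ker (MC A B C : (H × K) →ₗ[ℂ] (H × K))) →ₗ[ℂ]
        ((LinearMap.ker (A : H →ₗ[ℂ] H)) × (LinearMap.ker (D : (LinearMap.ker (B : K →ₗ[ℂ] K)) →ₗ[ℂ] W))) :=
      { toFun := fun z =>
          (⟨z.1.1, (key z.1 z.2).1⟩,
            ⟨⟨z.1.2, (key z.1 z.2).2.choose⟩,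
              LinearMap.mem_ker.mpr (key z.1 z.2).2.choose_spec⟩)
        map_add' := fun a b => by
          refine Prod.ext (Subtype.ext rfl) (Subtype.ext (Subtype.ext rfl))
        map_smul' := fun c a => by
          refine Prod.ext (Subtype.ext rfl) (Subtype.ext (Subtype.ext rfl)) }
    have hphi : Function.Injective phi := by
      intro z z' hz
      rw [Prod.ext_iff] at hz
      obtain ⟨hz1, hz2⟩ := hz
      have e1 : z.1.1 = z'.1.1 := congrArg Subtype.val hz1
      have e2 : z.1.2 = z'.1.2 := congrArg (Subtype.val ∘ Subtype.val) hz2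
      exact Subtype.ext (Prod.ext e1 e2)
    haveI : Module.Free ℂ (LinearMap.ker (A : H →ₗ[ℂ] H)) := Module.Free.of_divisionRing ℂ _
    haveI : Module.Free ℂ (LinearMap.ker (D : (LinearMap.ker (B : K →ₗ[ℂ] K)) →ₗ[ℂ] W)) := Module.Free.of_divisionRing ℂ _
    calc alphaDim (MC A B C)
        ≤ Module.rank ℂ ((LinearMap.ker (A : H →ₗ[ℂ] H)) × (LinearMap.ker (D : (LinearMap.ker (B : K →ₗ[ℂ] K)) →ₗ[ℂ] W))) :=
          LinearMap.rank_le_of_injective phi hphi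
      _ = Module.rank ℂ (LinearMap.ker (A : H →ₗ[ℂ] H)) + Module.rank ℂ (LinearMap.ker (D : (LinearMap.ker (B : K →ₗ[ℂ] K)) →ₗ[ℂ] W)) := rank_prod'
      _ < ℵ₀ := add_lt_aleph0 hA1 hDker

theorem stmt_12
  [TopologicalSpace.SeparableSpace H] [TopologicalSpace.SeparableSpace K]
    (hH : ¬ FiniteDimensional ℂ H) (hK : ¬ FiniteDimensional ℂ K)
    (A : H →L[ℂ] H) (B : K →L[ℂ] K) :
    (∃ C : K →L[ℂ] H, Function.Surjective (MC A B C) ∧ alphaDim (MC A B C) < ℵ₀) ↔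
      Function.Surjective B ∧ (alphaDim A < ℵ₀ ∧ IsClosed (Set.range A)) ∧
        ((betaDim A ≤ alphaDim B ∧ alphaDim B < ℵ₀) ∨ (ℵ₀ ≤ alphaDim B ∧ ℵ₀ ≤ betaDim A)) := by
  constructor
  · rintro ⟨C, h1, h2⟩
    exact myForward A B C h1 h2
  · rintro ⟨hB, ⟨hA1, hA2⟩, hd⟩
    exact myBackward A B hB hA1 hA2 hd
end
end

section
/- For every C, the FLI spectrum of A minus the set (σ_d(A) ∩ σ_l(B)) is contained in the FLI spectrum of M_C, which is in turn contained in σ_FLI(A) ∪ σ_FLI(B). Here σ_FLI(T) = {λ : T − λ is not injective with finite-codimensional range}, σ_d(A) = {λ : A − λ not surjective}, σ_l(B) = {λ : B − λ not left invertible}. -/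
open ContinuousLinearMap Cardinal

noncomputable section

universe u

section aux
variable {V : Type u} [AddCommGroup V] [Module ℂ V]

lemma rank_quot_lt_aleph0_of_sup {p q : Submodule ℂ V} (h : p ⊔ q = ⊤)
    (hq : Module.rank ℂ q < ℵ₀) : Module.rank ℂ (V ⧸ p) < ℵ₀ := by
  have hs : Function.Surjective (p.mkQ.comp q.subtype) := by
    intro z
    obtain ⟨v, rfl⟩ := p.mkQ_surjective z
    have hv : v ∈ p ⊔ q := h ▸ Submodule.mem_top
    obtain ⟨a, ha, b, hb, rfl⟩ := Submodule.mem_sup.mp hv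
    refine ⟨⟨b, hb⟩, ?_⟩
    simp [Submodule.Quotient.mk_add, (Submodule.Quotient.mk_eq_zero p).mpr ha]
  exact lt_of_le_of_lt ((p.mkQ.comp q.subtype).rank_le_of_surjective hs) hq

lemma exists_compl_rank_lt {p : Submodule ℂ V} (h : Module.rank ℂ (V ⧸ p) < ℵ₀) :
    ∃ q : Submodule ℂ V, p ⊔ q = ⊤ ∧ Module.rank ℂ q < ℵ₀ := by
  obtain ⟨q, hq⟩ := p.exists_isCompl
  refine ⟨q, hq.sup_eq_top, ?_⟩
  rwa [← (Submodule.quotientEquivOfIsCompl p q hq).rank_eq]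

end aux

section mc
variable {H K : Type u} [NormedAddCommGroup H] [NormedSpace ℂ H]
    [NormedAddCommGroup K] [NormedSpace ℂ K]
    (A : H →L[ℂ] H) (B : K →L[ℂ] K) (C : K →L[ℂ] H)

@[simp] lemma MC_apply_s16 (x : H) (y : K) : MC A B C (x, y) = (A x + C y, B y) := rfl

lemma shf_MC (l : ℂ) : shf (MC A B C) l = MC (shf A l) (shf B l) C := by
  apply ContinuousLinearMap.ext
  rintro ⟨x, y⟩
  simp only [shf, ContinuousLinearMap.sub_apply, ContinuousLinearMap.smul_apply,
    ContinuousLinearMap.id_apply, MC_apply_s16, Prod.smul_mk, Prod.mk_sub_mk, Prod.mk.injEq]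
  exact ⟨by abel, trivial⟩

lemma MC_inj_left (h : Function.Injective (MC A B C)) : Function.Injective A := by
  intro x y hxy
  have : MC A B C (x, 0) = MC A B C (y, 0) := by simp [hxy]
  exact (Prod.ext_iff.mp (h this)).1

lemma MC_inj (hA : Function.Injective A) (hB : Function.Injective B) :
    Function.Injective (MC A B C) := by
  rintro ⟨x, y⟩ ⟨x', y'⟩ h
  simp only [MC_apply_s16, Prod.ext_iff] at h
  have hy : y = y' := hB h.2
  subst hy
  have hx : x = x' := hA (by have := h.1; simpa using add_right_cancel this)
  simp [hx]

lemma betaDim_MC_lt (hA : betaDim A < ℵ₀) (hB : betaDim B < ℵ₀) :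
    betaDim (MC A B C) < ℵ₀ := by
  obtain ⟨Fa, hFa, hFar⟩ := exists_compl_rank_lt hA
  obtain ⟨Fb, hFb, hFbr⟩ := exists_compl_rank_lt hB
  have hsup : LinearMap.range (MC A B C : (H × K) →ₗ[ℂ] (H × K)) ⊔ Fa.prod Fb = ⊤ := by
    rw [Submodule.eq_top_iff']
    rintro ⟨x, y⟩
    have hy : y ∈ LinearMap.range (B : K →ₗ[ℂ] K) ⊔ Fb := hFb ▸ Submodule.mem_top
    obtain ⟨b, hb, fb, hfb, hy⟩ := Submodule.mem_sup.mp hy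
    obtain ⟨k, rfl⟩ := hb
    have hx : x - C k ∈ LinearMap.range (A : H →ₗ[ℂ] H) ⊔ Fa := hFa ▸ Submodule.mem_top
    obtain ⟨a, ha, fa, hfa, hx⟩ := Submodule.mem_sup.mp hx
    obtain ⟨w, rfl⟩ := ha
    refine Submodule.mem_sup.mpr ⟨MC A B C (w, k), ⟨(w, k), rfl⟩, (fa, fb),
      Submodule.mem_prod.mpr ⟨hfa, hfb⟩, ?_⟩
    simp only [MC_apply_s16, Prod.mk_add_mk, Prod.mk.injEq]
    rw [eq_sub_iff_add_eq] at hx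
    exact ⟨by rw [← hx]; simp only [ContinuousLinearMap.coe_coe]; abel, hy⟩
  refine rank_quot_lt_aleph0_of_sup hsup ?_
  have hgs : Function.Surjective
      (((Fa.subtype.prodMap Fb.subtype).codRestrict (Fa.prod Fb)
        (by rintro ⟨a, b⟩; exact ⟨a.2, b.2⟩))) := by
    rintro ⟨⟨x, y⟩, hx, hy⟩
    exact ⟨(⟨x, hx⟩, ⟨y, hy⟩), rfl⟩
  refine lt_of_le_of_lt (LinearMap.rank_le_of_surjective _ hgs) ?_
  rw [rank_prod']
  exact add_lt_aleph0 hFar hFbr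

lemma betaDim_left_lt (hB : Function.Injective B)
    (hM : betaDim (MC A B C) < ℵ₀) : betaDim A < ℵ₀ := by
  set p := LinearMap.range (MC A B C : (H × K) →ₗ[ℂ] (H × K))
  let f : H →ₗ[ℂ] (H × K) ⧸ p := p.mkQ.comp (LinearMap.inl ℂ H K)
  have hker : LinearMap.ker f = LinearMap.range (A : H →ₗ[ℂ] H) := by
    ext x
    constructor
    · intro hx
      have : (x, (0 : K)) ∈ p := by
        simpa [f, Submodule.Quotient.mk_eq_zero] using hx
      obtain ⟨⟨w, k⟩, hw⟩ := this
      simp only [MC_apply_s16, Prod.ext_iff] at hw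
      have hk : k = 0 := hB (by simpa using hw.2)
      subst hk
      exact ⟨w, by simpa using hw.1⟩
    · rintro ⟨w, rfl⟩
      have : ((A w, (0 : K)) : H × K) ∈ p := ⟨(w, 0), by simp⟩
      simpa [f, Submodule.Quotient.mk_eq_zero] using this
  have h1 : betaDim A = Module.rank ℂ (H ⧸ LinearMap.ker f) := by
    rw [hker]; rfl
  rw [h1, f.quotKerEquivRange.rank_eq]
  exact lt_of_le_of_lt (Submodule.rank_le _) hM

lemma betaDim_lt_of_surj (hA : Function.Surjective A) : betaDim A < ℵ₀ := by
  have h : LinearMap.range (A : H →ₗ[ℂ] H) ⊔ (⊥ : Submodule ℂ H) = ⊤ := by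
    rw [sup_bot_eq, LinearMap.range_eq_top]; exact hA
  exact rank_quot_lt_aleph0_of_sup h (by simp [rank_bot]; exact aleph0_pos)

end mc

variable {H K : Type u}
  [NormedAddCommGroup H] [InnerProductSpace ℂ H] [CompleteSpace H]
  [NormedAddCommGroup K] [InnerProductSpace ℂ K] [CompleteSpace K]

theorem stmt_16 (A : H →L[ℂ] H) (B : K →L[ℂ] K) (C : K →L[ℂ] H) :
    sigmaFLI A \ ({l : ℂ | ¬ Function.Surjective (shf A l)} ∩
        {l : ℂ | ¬ (Function.Injective (shf B l) ∧ IsClosed (Set.range (shf B l)))})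
      ⊆ sigmaFLI (MC A B C) ∧
    sigmaFLI (MC A B C) ⊆ sigmaFLI A ∪ sigmaFLI B := by
  constructor
  · rintro l ⟨hA, hne⟩
    have key : Function.Surjective (shf A l) ∨ Function.Injective (shf B l) := by
      by_contra hk
      push_neg at hk
      exact hne ⟨hk.1, fun hBC => hk.2 hBC.1⟩
    intro hM
    rw [shf_MC] at hM
    obtain ⟨hMi, hMb⟩ := hM
    have hAi : Function.Injective (shf A l) := MC_inj_left _ _ _ hMi
    have hAb : ¬ betaDim (shf A l) < ℵ₀ := fun h => hA ⟨hAi, h⟩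
    rcases key with hsurj | hBinj
    · exact hAb (betaDim_lt_of_surj _ hsurj)
    · exact hAb (betaDim_left_lt _ _ C hBinj hMb)
  · intro l hM
    by_contra hc
    simp only [Set.mem_union, sigmaFLI, Set.mem_setOf_eq, not_or, not_not] at hc
    obtain ⟨⟨hAi, hAb⟩, ⟨hBi, hBb⟩⟩ := hc
    apply hM
    rw [shf_MC]
    exact ⟨MC_inj _ _ _ hAi hBi, betaDim_MC_lt _ _ _ hAb hBb⟩
end
end
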